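/- Let (q(i))_{i≥1} be nonnegative reals and R > 0 such that the power series φ(z) = Σ_{i≥1} q(i) z^i has radius of convergence R. Suppose for each pair n < m there is given R_{n,m} > R with Σ_{i=1}^{k(m)} c_{n,m}(i) R_{n,m}^i = 1, where 0 ≤ c_{n,m}(i) ≤ q(i) for all i and c_{n,m}(m) = q(m). Then for every n, liminf_{m→∞} R_{n,m} = R. -/

import Mathlib

open Filter

theorem stmt1 (q : ℕ → ℝ) (hq : ∀ i, 0 ≤ q i) (R : ℝ) (hR : 0 < R)
    (hCH : Filter.limsup (fun m => (q m) ^ ((1 : ℝ) / m)) atTop = 1 / R)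
    (Rnm : ℕ → ℕ → ℝ) (k : ℕ → ℕ) (c : ℕ → ℕ → ℕ → ℝ)
    (hck : ∀ n m, n < m → m ≤ k m)
    (hc0 : ∀ n m i, n < m → 0 ≤ c n m i ∧ c n m i ≤ q i)
    (hcm : ∀ n m, n < m → c n m m = q m)
    (hRnm : ∀ n m, n < m → R < Rnm n m)
    (heq : ∀ n m, n < m → ∑ i ∈ Finset.Icc 1 (k m), c n m i * (Rnm n m) ^ i = 1) :
    ∀ n, Filter.liminf (fun m => Rnm n m) atTop = R := by
  intro n
  -- coboundedness of q m ^ (1/m)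
  have hcob : IsCoboundedUnder (· ≤ ·) atTop (fun m => (q m) ^ ((1 : ℝ) / m)) := by
    apply IsCoboundedUnder.of_frequently_ge (a := 0)
    exact Frequently.of_forall fun m => Real.rpow_nonneg (hq m) _
  -- the key frequently bound
  have key : ∀ ε : ℝ, 0 < ε → ∃ᶠ m in atTop, Rnm n m < R + ε := by
    intro ε hε
    have hRε : 0 < R + ε := by linarith
    have hb : (0:ℝ) < 1 / (R + ε) := by positivity
    have hlt : 1 / (R + ε) < limsup (fun m => (q m) ^ ((1 : ℝ) / m)) atTop := by
      rw [hCH]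
      exact one_div_lt_one_div_of_lt hR (by linarith)
    have hfreq := frequently_lt_of_lt_limsup hcob hlt
    have := hfreq.and_eventually (eventually_gt_atTop n)
    refine this.mono fun m ⟨hbm, hnm⟩ => ?_
    have hm1 : 1 ≤ m := Nat.one_le_of_lt hnm
    have hmne : (m:ℝ) ≠ 0 := Nat.cast_ne_zero.mpr (by omega)
    -- (1/(R+ε))^m < q m
    have hpow : (1 / (R + ε)) ^ m < q m := by
      have h1 : (1 / (R + ε)) ^ m < ((q m) ^ ((1:ℝ) / m)) ^ m :=
        pow_lt_pow_left₀ hbm hb.le (by omega)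
      have h2 : ((q m) ^ ((1:ℝ) / m)) ^ m = q m := by
        rw [← Real.rpow_natCast ((q m) ^ ((1:ℝ) / m)) m, ← Real.rpow_mul (hq m),
          one_div_mul_cancel hmne, Real.rpow_one]
      rwa [h2] at h1
    have hqpos : 0 < q m := lt_of_le_of_lt (pow_nonneg hb.le m) hpow
    have hRpos : 0 < Rnm n m := lt_trans hR (hRnm n m hnm)
    -- q m * Rnm^m ≤ 1
    have hsum : q m * (Rnm n m) ^ m ≤ 1 := by
      have hmem : m ∈ Finset.Icc 1 (k m) := Finset.mem_Icc.mpr ⟨hm1, hck n m hnm⟩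
      have hle := Finset.single_le_sum
        (f := fun i => c n m i * (Rnm n m) ^ i)
        (fun i _ => mul_nonneg (hc0 n m i hnm).1 (pow_nonneg hRpos.le i)) hmem
      rw [hcm n m hnm, heq n m hnm] at hle
      exact hle
    -- Rnm^m < (R+ε)^m
    have hfin : (Rnm n m) ^ m < (R + ε) ^ m := by
      have h1 : (Rnm n m) ^ m ≤ 1 / q m := by
        rw [le_div_iff₀ hqpos]
        linarith [hsum]
      have h2 : 1 / q m < 1 / ((1 / (R + ε)) ^ m) :=
        one_div_lt_one_div_of_lt (pow_pos hb m) hpow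
      have h3 : 1 / ((1 / (R + ε)) ^ m) = (R + ε) ^ m := by
        rw [one_div_pow]
        field_simp
      linarith
    exact lt_of_pow_lt_pow_left₀ m hRε.le hfin
  -- lower bound eventually
  have hev : ∀ᶠ m in atTop, R ≤ Rnm n m :=
    (eventually_gt_atTop n).mono fun m h => (hRnm n m h).le
  have hbdd : IsBoundedUnder (· ≥ ·) atTop (fun m => Rnm n m) := ⟨R, by simpa using hev⟩
  have hcob2 : IsCoboundedUnder (· ≥ ·) atTop (fun m => Rnm n m) :=
    IsCoboundedUnder.of_frequently_le ((key 1 one_pos).mono fun m h => h.le)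
  refine le_antisymm ?_ (le_liminf_of_le hcob2 hev)
  refine le_of_forall_pos_le_add fun ε hε => ?_
  exact liminf_le_of_frequently_le ((key ε hε).mono fun m h => h.le) hbdd
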